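/- Let (A, H) be a matched pair of finite quasigroupoids and K a field. The vector space K[A]⋈K[H] spanned by pairs a⊗h with s_A(a) = t_H(h), with product (a⊗h)(b⊗g) = a•φ_A(h,b) ⊗ φ_H(h,b)⋆g if s_H(h) = t_A(b) and 0 otherwise, unit Σ_{x∈A₀} id_A(x)⊗id_H(x), counit ε(a⊗h) = 1, coproduct δ(a⊗h) = (a⊗h)⊗(a⊗h), and antipode λ(a⊗h) = φ_A(λ_H(h),λ_A(a)) ⊗ φ_H(λ_H(h),λ_A(a)), is a cocommutative weak Hopf quasigroup with target Π^L(a⊗h) = id_A(t_A(a))⊗id_H(t_A(a)) and source Π^R(a⊗h) = id_A(s_H(h))⊗id_H(s_H(h)). -/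

import Mathlib

/-- A quasigroupoid: objects `O`, arrows `A`, with a partial product `mul`
(meaningful on composable pairs, i.e. when `s a = t b`) and inverse map `inv`.
All axioms involving the product are guarded by composability hypotheses. -/
structure Quasigroupoid (O : Type*) (A : Type*) where
  s : A → O
  t : A → O
  e : O → A
  inv : A → A
  mul : A → A → A
  s_e : ∀ x, s (e x) = x
  t_e : ∀ x, t (e x) = x
  e_mul : ∀ a, mul (e (t a)) a = a
  mul_e : ∀ a, mul a (e (s a)) = a
  s_mul : ∀ a b, s a = t b → s (mul a b) = s b
  t_mul : ∀ a b, s a = t b → t (mul a b) = t a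
  inv_comp_left : ∀ a b, s a = t b → s (inv a) = t (mul a b)
  inv_mul_cancel : ∀ a b, s a = t b → mul (inv a) (mul a b) = b
  comp_inv_right : ∀ a b, s a = t b → s (mul a b) = t (inv b)
  mul_inv_cancel : ∀ a b, s a = t b → mul (mul a b) (inv b) = a

/-- A matched pair of quasigroupoids with common base `O`:
a left action `φA` of `H` on `A` and a right action `φH` of `A` on `H`
satisfying the module conditions and the matched pair compatibilities. -/
structure IsMatchedPair {O A1 H1 : Type*} (A : Quasigroupoid O A1) (H : Quasigroupoid O H1)
    (φA : H1 → A1 → A1) (φH : H1 → A1 → H1) : Prop where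
  t_act : ∀ h a, H.s h = A.t a → A.t (φA h a) = H.t h
  act_mul : ∀ g h a, H.s g = H.t h → H.s h = A.t a → φA (H.mul g h) a = φA g (φA h a)
  act_id : ∀ a, φA (H.e (A.t a)) a = a
  s_act : ∀ h a, H.s h = A.t a → H.s (φH h a) = A.s a
  actH_mul : ∀ h a b, H.s h = A.t a → A.s a = A.t b → φH h (A.mul a b) = φH (φH h a) b
  actH_id : ∀ h, φH h (A.e (H.s h)) = h
  compat_st : ∀ h a, H.s h = A.t a → A.s (φA h a) = H.t (φH h a)
  compat_mulA : ∀ h a b, H.s h = A.t a → A.s a = A.t b →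
    φA h (A.mul a b) = A.mul (φA h a) (φA (φH h a) b)
  compat_mulH : ∀ g h a, H.s g = H.t h → H.s h = A.t a →
    φH (H.mul g h) a = H.mul (φH g (φA h a)) (φH h a)

open TensorProduct

/-- `s(λ a) = t a` in a quasigroupoid (derived from the axioms). -/
theorem Quasigroupoid.s_inv' {O A1 : Type*} (Q : Quasigroupoid O A1) (a : A1) :
    Q.s (Q.inv a) = Q.t a := by
  have hc : Q.s a = Q.t (Q.e (Q.s a)) := (Q.t_e _).symm
  have h := Q.inv_comp_left a (Q.e (Q.s a)) hc
  rwa [Q.mul_e a] at h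

/-- `t(λ a) = s a` in a quasigroupoid (derived from the axioms). -/
theorem Quasigroupoid.t_inv' {O A1 : Type*} (Q : Quasigroupoid O A1) (a : A1) :
    Q.t (Q.inv a) = Q.s a := by
  have hc : Q.s (Q.e (Q.t a)) = Q.t a := Q.s_e _
  have h := Q.comp_inv_right (Q.e (Q.t a)) a hc
  rw [Q.e_mul a] at h
  exact h.symm

noncomputable section

variable (K : Type*) [Field K] {O A1 H1 : Type*} [Fintype O] [DecidableEq O]

/-- The arrows of the double cross product `A ⋈ H`: pairs `(a,h)` with `s_A a = t_H h`.
These index the basis of `K[A] ⋈ K[H]`. -/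
abbrev BPair (A : Quasigroupoid O A1) (H : Quasigroupoid O H1) : Type _ :=
  {p : A1 × H1 // A.s p.1 = H.t p.2}

variable (A : Quasigroupoid O A1) (H : Quasigroupoid O H1)
  (φA : H1 → A1 → A1) (φH : H1 → A1 → H1)

/-- Basis element `a ⊗ h` of `K[A] ⋈ K[H]`. -/
def pb (p : BPair A H) : BPair A H →₀ K := Finsupp.single p 1

/-- The grouplike element `id_A(x) ⊗ id_H(x)`. -/
def punit (x : O) : BPair A H := ⟨(A.e x, H.e x), by rw [A.s_e, H.t_e]⟩

/-- The product of `K[A] ⋈ K[H]`: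
`(a ⊗ h)(b ⊗ g) = a•φA(h,b) ⊗ φH(h,b)⋆g` when `s_H h = t_A b`, and `0` otherwise. -/
def bmul (hmp : IsMatchedPair A H φA φH) :
    (BPair A H →₀ K) →ₗ[K] (BPair A H →₀ K) →ₗ[K] (BPair A H →₀ K) :=
  Finsupp.lift ((BPair A H →₀ K) →ₗ[K] (BPair A H →₀ K)) K (BPair A H) fun p =>
    Finsupp.lift (BPair A H →₀ K) K (BPair A H) fun q =>
      if hc : H.s p.val.2 = A.t q.val.1 then
        Finsupp.single
          (⟨(A.mul p.val.1 (φA p.val.2 q.val.1), H.mul (φH p.val.2 q.val.1) q.val.2), by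
            have h1 : A.s p.val.1 = A.t (φA p.val.2 q.val.1) := by
              rw [hmp.t_act _ _ hc]; exact p.2
            have h2 : H.s (φH p.val.2 q.val.1) = H.t q.val.2 := by
              rw [hmp.s_act _ _ hc]; exact q.2
            rw [A.s_mul _ _ h1, H.t_mul _ _ h2]
            exact hmp.compat_st _ _ hc⟩ : BPair A H) 1
      else 0

/-- The unit `∑_{x ∈ A₀} id_A(x) ⊗ id_H(x)` of `K[A] ⋈ K[H]`. -/
def bone : BPair A H →₀ K := ∑ x : O, Finsupp.single (punit A H x) 1

/-- The coproduct: linear extension of `δ(a ⊗ h) = (a ⊗ h) ⊗ (a ⊗ h)`. -/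
def bdelta : (BPair A H →₀ K) →ₗ[K] (BPair A H →₀ K) ⊗[K] (BPair A H →₀ K) :=
  Finsupp.lift ((BPair A H →₀ K) ⊗[K] (BPair A H →₀ K)) K (BPair A H) fun p =>
    Finsupp.single p 1 ⊗ₜ[K] Finsupp.single p 1

/-- The counit: linear extension of `ε(a ⊗ h) = 1`. -/
def beps : (BPair A H →₀ K) →ₗ[K] K := Finsupp.lift K K (BPair A H) fun _ => 1

/-- The antipode: linear extension of
`λ(a ⊗ h) = φA(λ_H h, λ_A a) ⊗ φH(λ_H h, λ_A a)`. -/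
def bS (hmp : IsMatchedPair A H φA φH) :
    (BPair A H →₀ K) →ₗ[K] (BPair A H →₀ K) :=
  Finsupp.lift (BPair A H →₀ K) K (BPair A H) fun p =>
    Finsupp.single
      (⟨(φA (H.inv p.val.2) (A.inv p.val.1), φH (H.inv p.val.2) (A.inv p.val.1)), by
        have h1 : H.s (H.inv p.val.2) = A.t (A.inv p.val.1) := by
          rw [Quasigroupoid.s_inv', Quasigroupoid.t_inv']; exact p.2.symm
        exact hmp.compat_st _ _ h1⟩ : BPair A H) 1

/-- The target map: linear extension of `Π^L(a ⊗ h) = id_A(t_A a) ⊗ id_H(t_A a)`. -/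
def bPiL : (BPair A H →₀ K) →ₗ[K] (BPair A H →₀ K) :=
  Finsupp.lift (BPair A H →₀ K) K (BPair A H) fun p =>
    Finsupp.single (punit A H (A.t p.val.1)) 1

/-- The source map: linear extension of `Π^R(a ⊗ h) = id_A(s_H h) ⊗ id_H(s_H h)`. -/
def bPiR : (BPair A H →₀ K) →ₗ[K] (BPair A H →₀ K) :=
  Finsupp.lift (BPair A H →₀ K) K (BPair A H) fun p =>
    Finsupp.single (punit A H (H.s p.val.2)) 1

namespace Quasigroupoid
variable {O A1 : Type*} (Q : Quasigroupoid O A1)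

theorem inv_mul_self (a : A1) : Q.mul (Q.inv a) a = Q.e (Q.s a) := by
  have h := Q.inv_mul_cancel a (Q.e (Q.s a)) (Q.t_e _).symm
  rwa [Q.mul_e] at h

theorem mul_inv_self (a : A1) : Q.mul a (Q.inv a) = Q.e (Q.t a) := by
  have h := Q.mul_inv_cancel (Q.e (Q.t a)) a (Q.s_e _)
  rwa [Q.e_mul] at h

theorem inv_inv (a : A1) : Q.inv (Q.inv a) = a := by
  have h := Q.mul_inv_cancel a (Q.inv a) (Q.t_inv' a).symm
  rw [Q.mul_inv_self, show Q.t a = Q.t (Q.inv (Q.inv a)) by rw [Q.t_inv', Q.s_inv'],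
    Q.e_mul] at h
  exact h

theorem eq_inv_left {x v : A1} (hc : Q.s x = Q.t v) (h : Q.mul x v = Q.e (Q.s v)) :
    x = Q.inv v := by
  have h2 := Q.mul_inv_cancel x v hc
  rw [h, show Q.s v = Q.t (Q.inv v) from (Q.t_inv' v).symm, Q.e_mul] at h2
  exact h2.symm

theorem eq_inv_right {x v : A1} (hc : Q.s x = Q.t v) (h : Q.mul x v = Q.e (Q.t x)) :
    v = Q.inv x := by
  have h2 := Q.inv_mul_cancel x v hc
  rw [h, show Q.t x = Q.s (Q.inv x) from (Q.s_inv' x).symm, Q.mul_e] at h2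
  exact h2.symm

theorem eq_e_of_idem {u : A1} (hc : Q.s u = Q.t u) (h : Q.mul u u = u) :
    u = Q.e (Q.s u) := by
  have h1 := Q.inv_mul_cancel u u hc
  rw [h] at h1
  have h2 := Q.inv_mul_cancel u (Q.e (Q.s u)) (Q.t_e _).symm
  rw [Q.mul_e] at h2
  exact h1.symm.trans h2

end Quasigroupoid
section MP
variable (hmp : IsMatchedPair A H φA φH)
include hmp

theorem mp_phiH_e (a : A1) : φH (H.e (A.t a)) a = H.e (A.s a) := by
  set x := A.t a with hx
  set u := φH (H.e x) a with hu
  have hsx : H.s (H.e x) = A.t a := by rw [H.s_e]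
  have hee : H.mul (H.e x) (H.e x) = H.e x := by
    have := H.e_mul (H.e x); rwa [H.t_e] at this
  have hidem : H.mul u u = u := by
    have h := hmp.compat_mulH (H.e x) (H.e x) a (by rw [H.s_e, H.t_e]) hsx
    rw [hee, hmp.act_id a] at h
    exact h.symm
  have hsu : H.s u = A.s a := hmp.s_act _ _ hsx
  have htu : H.t u = A.s a := by
    have h := hmp.compat_st (H.e x) a hsx
    rw [hmp.act_id a] at h
    exact h.symm
  have := H.eq_e_of_idem (by rw [hsu, htu]) hidem
  rwa [hsu] at this

theorem mp_phiA_e (h : H1) : φA h (A.e (H.s h)) = A.e (H.t h) := by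
  set v := φA h (A.e (H.s h)) with hv
  have hc1 : H.s h = A.t (A.e (H.s h)) := by rw [A.t_e]
  have hc2 : A.s (A.e (H.s h)) = A.t (A.e (H.s h)) := by rw [A.s_e, A.t_e]
  have hee : A.mul (A.e (H.s h)) (A.e (H.s h)) = A.e (H.s h) := by
    have := A.e_mul (A.e (H.s h)); rwa [A.t_e] at this
  have hidem : A.mul v v = v := by
    have hh := hmp.compat_mulA h (A.e (H.s h)) (A.e (H.s h)) hc1 hc2
    rw [hee, hmp.actH_id h] at hh
    exact hh.symm
  have htv : A.t v = H.t h := hmp.t_act _ _ hc1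
  have hsv : A.s v = H.t h := by
    have hh := hmp.compat_st h (A.e (H.s h)) hc1
    rw [hmp.actH_id h] at hh
    exact hh
  have := A.eq_e_of_idem (by rw [hsv, htv]) hidem
  rwa [hsv] at this

theorem mp_actH_inv (k : H1) (c : A1) (hc : H.s k = A.t c) :
    φH (φH k c) (A.inv c) = k := by
  have h := hmp.actH_mul k c (A.inv c) hc (A.t_inv' c).symm
  rw [A.mul_inv_self, ← hc, hmp.actH_id k] at h
  exact h.symm

theorem mp_inv_actA (k : H1) (b : A1) (hc : H.s k = A.t b) :
    φH (H.inv k) (φA k b) = H.inv (φH k b) := by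
  have hck : H.s (H.inv k) = H.t k := H.s_inv' k
  have hcb : H.s (H.inv k) = A.t (φA k b) := by rw [hck, hmp.t_act k b hc]
  have h := hmp.compat_mulH (H.inv k) k b hck hc
  rw [H.inv_mul_self, hc, mp_phiH_e A H φA φH hmp] at h
  have hsw : H.s (φH k b) = A.s b := hmp.s_act k b hc
  have hcu : H.s (φH (H.inv k) (φA k b)) = H.t (φH k b) := by
    rw [hmp.s_act _ _ hcb, hmp.compat_st k b hc]
  exact H.eq_inv_left hcu (by rw [hsw]; exact h.symm)

theorem mp_actA_inv (k : H1) (c : A1) (hc : H.s k = A.t c) :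
    φA (φH k c) (A.inv c) = A.inv (φA k c) := by
  have h := hmp.compat_mulA k c (A.inv c) hc (A.t_inv' c).symm
  rw [A.mul_inv_self, ← hc, mp_phiA_e A H φA φH hmp] at h
  have htx : A.t (φA k c) = H.t k := hmp.t_act k c hc
  have hcx : A.s (φA k c) = A.t (φA (φH k c) (A.inv c)) := by
    rw [hmp.compat_st k c hc, hmp.t_act _ _ (by rw [hmp.s_act k c hc, A.t_inv'])]
  exact A.eq_inv_right hcx (by rw [htx]; exact h.symm)

end MP
set_option linter.unusedSectionVars false

section Basis
variable (hmp : IsMatchedPair A H φA φH)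

/-- product pair -/
def mpair (p q : BPair A H) (hc : H.s p.val.2 = A.t q.val.1) : BPair A H :=
  ⟨(A.mul p.val.1 (φA p.val.2 q.val.1), H.mul (φH p.val.2 q.val.1) q.val.2), by
    have h1 : A.s p.val.1 = A.t (φA p.val.2 q.val.1) := by
      rw [hmp.t_act _ _ hc]; exact p.2
    have h2 : H.s (φH p.val.2 q.val.1) = H.t q.val.2 := by
      rw [hmp.s_act _ _ hc]; exact q.2
    rw [A.s_mul _ _ h1, H.t_mul _ _ h2]
    exact hmp.compat_st _ _ hc⟩

/-- antipode pair -/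
def spair (p : BPair A H) : BPair A H :=
  ⟨(φA (H.inv p.val.2) (A.inv p.val.1), φH (H.inv p.val.2) (A.inv p.val.1)), by
    have h1 : H.s (H.inv p.val.2) = A.t (A.inv p.val.1) := by
      rw [Quasigroupoid.s_inv', Quasigroupoid.t_inv']; exact p.2.symm
    exact hmp.compat_st _ _ h1⟩

theorem bmul_pb (p q : BPair A H) (hc : H.s p.val.2 = A.t q.val.1) :
    bmul K A H φA φH hmp (pb K A H p) (pb K A H q) =
      pb K A H (mpair A H φA φH hmp p q hc) := by
  simp only [bmul, pb, Finsupp.lift_apply, mpair]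
  rw [Finsupp.sum_single_index (by simp), one_smul, Finsupp.lift_apply,
    Finsupp.sum_single_index (by simp), one_smul, dif_pos hc]

theorem bmul_pb_ne (p q : BPair A H) (hc : ¬ (H.s p.val.2 = A.t q.val.1)) :
    bmul K A H φA φH hmp (pb K A H p) (pb K A H q) = 0 := by
  simp only [bmul, pb, Finsupp.lift_apply]
  rw [Finsupp.sum_single_index (by simp), one_smul, Finsupp.lift_apply,
    Finsupp.sum_single_index (by simp), one_smul, dif_neg hc]

theorem bmul_pb_eq (p q r : BPair A H) (hc : H.s p.val.2 = A.t q.val.1)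
    (hr : r.val = (A.mul p.val.1 (φA p.val.2 q.val.1), H.mul (φH p.val.2 q.val.1) q.val.2)) :
    bmul K A H φA φH hmp (pb K A H p) (pb K A H q) = pb K A H r := by
  rw [bmul_pb K A H φA φH hmp p q hc]
  congr 1
  exact Subtype.ext hr.symm

theorem bS_pb (p : BPair A H) :
    bS K A H φA φH hmp (pb K A H p) = pb K A H (spair A H φA φH hmp p) := by
  simp only [bS, pb, Finsupp.lift_apply, spair]
  rw [Finsupp.sum_single_index (by simp), one_smul]

theorem bPiL_pb (p : BPair A H) :
    bPiL K A H (pb K A H p) = pb K A H (punit A H (A.t p.val.1)) := by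
  simp only [bPiL, pb, Finsupp.lift_apply]
  rw [Finsupp.sum_single_index (by simp), one_smul]

theorem bPiR_pb (p : BPair A H) :
    bPiR K A H (pb K A H p) = pb K A H (punit A H (H.s p.val.2)) := by
  simp only [bPiR, pb, Finsupp.lift_apply]
  rw [Finsupp.sum_single_index (by simp), one_smul]

theorem bdelta_pb (p : BPair A H) :
    bdelta K A H (pb K A H p) = pb K A H p ⊗ₜ[K] pb K A H p := by
  simp only [bdelta, pb, Finsupp.lift_apply]
  rw [Finsupp.sum_single_index (by simp), one_smul]

theorem beps_pb (p : BPair A H) : beps K A H (pb K A H p) = 1 := by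
  simp only [beps, pb, Finsupp.lift_apply]
  rw [Finsupp.sum_single_index (by simp), smul_eq_mul, mul_one]

end Basis
section Units
variable (hmp : IsMatchedPair A H φA φH)

theorem punit_val (x : O) : (punit A H x : BPair A H).val = (A.e x, H.e x) := rfl

theorem bmul_punit_pb (x : O) (q : BPair A H) :
    bmul K A H φA φH hmp (pb K A H (punit A H x)) (pb K A H q) =
      if x = A.t q.val.1 then pb K A H q else 0 := by
  by_cases hx : x = A.t q.val.1
  · rw [if_pos hx]
    refine bmul_pb_eq K A H φA φH hmp _ _ _ ?_ ?_
    · show H.s (H.e x) = A.t q.val.1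
      rw [H.s_e]; exact hx
    · show q.val = (A.mul (A.e x) (φA (H.e x) q.val.1), H.mul (φH (H.e x) q.val.1) q.val.2)
      subst hx
      have e1 : φA (H.e (A.t q.val.1)) q.val.1 = q.val.1 := hmp.act_id _
      have e2 : φH (H.e (A.t q.val.1)) q.val.1 = H.e (A.s q.val.1) :=
        mp_phiH_e A H φA φH hmp _
      rw [e1, e2, A.e_mul, q.2, H.e_mul]
  · rw [if_neg hx]
    refine bmul_pb_ne K A H φA φH hmp _ _ ?_
    show ¬ (H.s (H.e x) = A.t q.val.1)
    rw [H.s_e]; exact hx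

theorem bmul_pb_punit (q : BPair A H) (x : O) :
    bmul K A H φA φH hmp (pb K A H q) (pb K A H (punit A H x)) =
      if H.s q.val.2 = x then pb K A H q else 0 := by
  by_cases hx : H.s q.val.2 = x
  · rw [if_pos hx]
    refine bmul_pb_eq K A H φA φH hmp _ _ _ ?_ ?_
    · show H.s q.val.2 = A.t (A.e x)
      rw [A.t_e]; exact hx
    · show q.val = (A.mul q.val.1 (φA q.val.2 (A.e x)), H.mul (φH q.val.2 (A.e x)) (H.e x))
      subst hx
      have e1 : φA q.val.2 (A.e (H.s q.val.2)) = A.e (H.t q.val.2) :=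
        mp_phiA_e A H φA φH hmp _
      have e2 : φH q.val.2 (A.e (H.s q.val.2)) = q.val.2 := hmp.actH_id _
      rw [e1, e2, ← q.2, A.mul_e, H.mul_e]
  · rw [if_neg hx]
    refine bmul_pb_ne K A H φA φH hmp _ _ ?_
    show ¬ (H.s q.val.2 = A.t (A.e x))
    rw [A.t_e]; exact hx

theorem bone_eq : bone K A H = ∑ x : O, pb K A H (punit A H x) := rfl

theorem bmul_bone_left (q : BPair A H) :
    bmul K A H φA φH hmp (bone K A H) (pb K A H q) = pb K A H q := by
  rw [bone_eq, map_sum, LinearMap.sum_apply]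
  have : ∀ x : O, bmul K A H φA φH hmp (pb K A H (punit A H x)) (pb K A H q) =
      if x = A.t q.val.1 then pb K A H q else 0 := fun x => bmul_punit_pb K A H φA φH hmp x q
  rw [Finset.sum_congr rfl fun x _ => this x, Finset.sum_ite_eq' Finset.univ (A.t q.val.1)
    (fun _ => pb K A H q), if_pos (Finset.mem_univ _)]

theorem bmul_bone_right (q : BPair A H) :
    bmul K A H φA φH hmp (pb K A H q) (bone K A H) = pb K A H q := by
  rw [bone_eq, map_sum]
  have : ∀ x : O, bmul K A H φA φH hmp (pb K A H q) (pb K A H (punit A H x)) =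
      if H.s q.val.2 = x then pb K A H q else 0 := fun x => bmul_pb_punit K A H φA φH hmp q x
  rw [Finset.sum_congr rfl fun x _ => this x, Finset.sum_ite_eq Finset.univ (H.s q.val.2)
    (fun _ => pb K A H q), if_pos (Finset.mem_univ _)]

end Units
section SPair
variable (hmp : IsMatchedPair A H φA φH)
include hmp

theorem hinv_comp (p : BPair A H) : H.s (H.inv p.val.2) = A.t (A.inv p.val.1) := by
  rw [H.s_inv', A.t_inv']; exact p.2.symm

theorem mpair_s2 (p q : BPair A H) (hc : H.s p.val.2 = A.t q.val.1) :
    H.s (mpair A H φA φH hmp p q hc).val.2 = H.s q.val.2 := by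
  show H.s (H.mul (φH p.val.2 q.val.1) q.val.2) = _
  refine H.s_mul _ _ ?_
  rw [hmp.s_act _ _ hc]; exact q.2

theorem mpair_t1 (p q : BPair A H) (hc : H.s p.val.2 = A.t q.val.1) :
    A.t (mpair A H φA φH hmp p q hc).val.1 = A.t p.val.1 := by
  show A.t (A.mul p.val.1 (φA p.val.2 q.val.1)) = _
  refine A.t_mul _ _ ?_
  rw [hmp.t_act _ _ hc]; exact p.2

theorem t_spair1 (p : BPair A H) :
    A.t (spair A H φA φH hmp p).val.1 = H.s p.val.2 := by
  show A.t (φA (H.inv p.val.2) (A.inv p.val.1)) = _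
  rw [hmp.t_act _ _ (hinv_comp A H φA φH hmp p), H.t_inv']

theorem s_spair2 (p : BPair A H) :
    H.s (spair A H φA φH hmp p).val.2 = A.t p.val.1 := by
  show H.s (φH (H.inv p.val.2) (A.inv p.val.1)) = _
  rw [hmp.s_act _ _ (hinv_comp A H φA φH hmp p), A.s_inv']

theorem phiA_p2_spair1 (p : BPair A H) :
    φA p.val.2 (spair A H φA φH hmp p).val.1 = A.inv p.val.1 := by
  show φA p.val.2 (φA (H.inv p.val.2) (A.inv p.val.1)) = _
  rw [← hmp.act_mul _ _ _ (H.t_inv' _).symm (hinv_comp A H φA φH hmp p), H.mul_inv_self,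
    show H.t p.val.2 = A.t (A.inv p.val.1) by rw [A.t_inv']; exact p.2.symm]
  exact hmp.act_id _

theorem phiH_p2_spair1 (p : BPair A H) :
    φH p.val.2 (spair A H φA φH hmp p).val.1 = H.inv (spair A H φA φH hmp p).val.2 := by
  have h := mp_inv_actA A H φA φH hmp (H.inv p.val.2) (A.inv p.val.1)
    (hinv_comp A H φA φH hmp p)
  rwa [H.inv_inv] at h

theorem phiA_spair2_p1 (p : BPair A H) :
    φA (spair A H φA φH hmp p).val.2 p.val.1 = A.inv (spair A H φA φH hmp p).val.1 := by
  have h := mp_actA_inv A H φA φH hmp (H.inv p.val.2) (A.inv p.val.1)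
    (hinv_comp A H φA φH hmp p)
  rwa [A.inv_inv] at h

theorem phiH_spair2_p1 (p : BPair A H) :
    φH (spair A H φA φH hmp p).val.2 p.val.1 = H.inv p.val.2 := by
  have h := mp_actH_inv A H φA φH hmp (H.inv p.val.2) (A.inv p.val.1)
    (hinv_comp A H φA φH hmp p)
  rwa [A.inv_inv] at h

end SPair
set_option maxHeartbeats 2000000
set_option synthInstance.maxHeartbeats 1000000

/-- For a matched pair of finite quasigroupoids, `K[A] ⋈ K[H]` is a cocommutative
weak Hopf quasigroup with the stated product, unit, counit, coproduct, antipode,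
target map `Π^L(a⊗h) = id_A(t_A a) ⊗ id_H(t_A a)` and source map
`Π^R(a⊗h) = id_A(s_H h) ⊗ id_H(s_H h)` (axioms involving multilinear maps are
stated on basis elements, which determines them by (multi)linearity). -/
theorem bowtie_weakHopfQuasigroup (hmp : IsMatchedPair A H φA φH) :
    -- unital magma
    (∀ f : BPair A H →₀ K,
      bmul K A H φA φH hmp (bone K A H) f = f ∧ bmul K A H φA φH hmp f (bone K A H) = f) ∧
    -- coalgebra: coassociativity
    (∀ v : BPair A H →₀ K,
      (TensorProduct.assoc K (BPair A H →₀ K) (BPair A H →₀ K) (BPair A H →₀ K))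
        ((TensorProduct.map (bdelta K A H)
          (LinearMap.id : (BPair A H →₀ K) →ₗ[K] (BPair A H →₀ K))) (bdelta K A H v)) =
      (TensorProduct.map (LinearMap.id : (BPair A H →₀ K) →ₗ[K] (BPair A H →₀ K))
        (bdelta K A H)) (bdelta K A H v)) ∧
    -- coalgebra: counit laws
    (∀ v : BPair A H →₀ K,
      (TensorProduct.lid K (BPair A H →₀ K))
        ((TensorProduct.map (beps K A H)
          (LinearMap.id : (BPair A H →₀ K) →ₗ[K] (BPair A H →₀ K))) (bdelta K A H v)) = v) ∧
    (∀ v : BPair A H →₀ K,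
      (TensorProduct.rid K (BPair A H →₀ K))
        ((TensorProduct.map (LinearMap.id : (BPair A H →₀ K) →ₗ[K] (BPair A H →₀ K))
          (beps K A H)) (bdelta K A H v)) = v) ∧
    -- cocommutativity
    (∀ v : BPair A H →₀ K,
      (TensorProduct.comm K (BPair A H →₀ K) (BPair A H →₀ K)) (bdelta K A H v) =
        bdelta K A H v) ∧
    -- (d1) on basis elements
    (∀ p q : BPair A H,
      bdelta K A H (bmul K A H φA φH hmp (pb K A H p) (pb K A H q)) =
        bmul K A H φA φH hmp (pb K A H p) (pb K A H q) ⊗ₜ[K]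
          bmul K A H φA φH hmp (pb K A H p) (pb K A H q)) ∧
    -- (d2) on basis elements
    (∀ p q r : BPair A H,
      beps K A H (bmul K A H φA φH hmp
          (bmul K A H φA φH hmp (pb K A H p) (pb K A H q)) (pb K A H r)) =
        beps K A H (bmul K A H φA φH hmp (pb K A H p)
          (bmul K A H φA φH hmp (pb K A H q) (pb K A H r))) ∧
      beps K A H (bmul K A H φA φH hmp
          (bmul K A H φA φH hmp (pb K A H p) (pb K A H q)) (pb K A H r)) =
        beps K A H (bmul K A H φA φH hmp (pb K A H p) (pb K A H q)) *
          beps K A H (bmul K A H φA φH hmp (pb K A H q) (pb K A H r))) ∧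
    -- (d3)
    ((∑ x : O, pb K A H (punit A H x) ⊗ₜ[K]
        (pb K A H (punit A H x) ⊗ₜ[K] pb K A H (punit A H x))) =
      ∑ x : O, ∑ y : O, pb K A H (punit A H x) ⊗ₜ[K]
        (bmul K A H φA φH hmp (pb K A H (punit A H x)) (pb K A H (punit A H y)) ⊗ₜ[K]
          pb K A H (punit A H y))) ∧
    ((∑ x : O, pb K A H (punit A H x) ⊗ₜ[K]
        (pb K A H (punit A H x) ⊗ₜ[K] pb K A H (punit A H x))) =
      ∑ x : O, ∑ y : O, pb K A H (punit A H x) ⊗ₜ[K]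
        (bmul K A H φA φH hmp (pb K A H (punit A H y)) (pb K A H (punit A H x)) ⊗ₜ[K]
          pb K A H (punit A H y))) ∧
    -- Π^L = id ∗ λ and Π^R = λ ∗ id (on basis elements)
    (∀ p : BPair A H,
      bmul K A H φA φH hmp (pb K A H p) (bS K A H φA φH hmp (pb K A H p)) =
        bPiL K A H (pb K A H p)) ∧
    (∀ p : BPair A H,
      bmul K A H φA φH hmp (bS K A H φA φH hmp (pb K A H p)) (pb K A H p) =
        bPiR K A H (pb K A H p)) ∧
    -- (d4-1) and (d4-2)
    (∀ p : BPair A H, bPiL K A H (pb K A H p) =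
      ∑ x : O, beps K A H (bmul K A H φA φH hmp (pb K A H (punit A H x)) (pb K A H p)) •
        pb K A H (punit A H x)) ∧
    (∀ p : BPair A H, bPiR K A H (pb K A H p) =
      ∑ x : O, beps K A H (bmul K A H φA φH hmp (pb K A H p) (pb K A H (punit A H x))) •
        pb K A H (punit A H x)) ∧
    -- (d4-3)
    (∀ p : BPair A H,
      bmul K A H φA φH hmp (bS K A H φA φH hmp (pb K A H p)) (bPiL K A H (pb K A H p)) =
        bS K A H φA φH hmp (pb K A H p) ∧
      bmul K A H φA φH hmp (bPiR K A H (pb K A H p)) (bS K A H φA φH hmp (pb K A H p)) =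
        bS K A H φA φH hmp (pb K A H p)) ∧
    -- (d4-4)
    (∀ p q : BPair A H,
      bmul K A H φA φH hmp (bS K A H φA φH hmp (pb K A H p))
          (bmul K A H φA φH hmp (pb K A H p) (pb K A H q)) =
        bmul K A H φA φH hmp (bPiR K A H (pb K A H p)) (pb K A H q)) ∧
    -- (d4-5)
    (∀ p q : BPair A H,
      bmul K A H φA φH hmp (pb K A H p)
          (bmul K A H φA φH hmp (bS K A H φA φH hmp (pb K A H p)) (pb K A H q)) =
        bmul K A H φA φH hmp (bPiL K A H (pb K A H p)) (pb K A H q)) ∧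
    -- (d4-6)
    (∀ p q : BPair A H,
      bmul K A H φA φH hmp
          (bmul K A H φA φH hmp (pb K A H q) (pb K A H p)) (bS K A H φA φH hmp (pb K A H p)) =
        bmul K A H φA φH hmp (pb K A H q) (bPiL K A H (pb K A H p))) ∧
    -- (d4-7)
    (∀ p q : BPair A H,
      bmul K A H φA φH hmp
          (bmul K A H φA φH hmp (pb K A H q) (bS K A H φA φH hmp (pb K A H p))) (pb K A H p) =
        bmul K A H φA φH hmp (pb K A H q) (bPiR K A H (pb K A H p))) ∧
    -- the explicit form of the target and source maps
    (∀ p : BPair A H, bPiL K A H (pb K A H p) = pb K A H (punit A H (A.t p.val.1))) ∧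
    (∀ p : BPair A H, bPiR K A H (pb K A H p) = pb K A H (punit A H (H.s p.val.2))) := by
  refine ⟨?_, ?_, ?_, ?_, ?_, ?_, ?_, ?_, ?_, ?_, ?_, ?_, ?_, ?_, ?_, ?_, ?_, ?_, ?_, ?_⟩
  · -- unit laws
    intro f
    constructor
    · induction f using Finsupp.induction_linear with
      | zero => simp
      | add f g hf hg => rw [map_add, hf, hg]
      | single a b =>
        rw [show Finsupp.single a b = b • pb K A H a by simp [pb, Finsupp.smul_single],
          map_smul, bmul_bone_left]
    · induction f using Finsupp.induction_linear with
      | zero => simp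
      | add f g hf hg =>
        rw [map_add, LinearMap.add_apply, hf, hg]
      | single a b =>
        rw [show Finsupp.single a b = b • pb K A H a by simp [pb, Finsupp.smul_single],
          map_smul, LinearMap.smul_apply, bmul_bone_right]
  · -- coassociativity
    intro v
    induction v using Finsupp.induction_linear with
    | zero => simp
    | add f g hf hg => rw [map_add, map_add, map_add, map_add, hf, hg]
    | single a b =>
      rw [show Finsupp.single a b = b • pb K A H a by simp [pb, Finsupp.smul_single]]
      simp only [map_smul, bdelta_pb, TensorProduct.map_tmul, LinearMap.id_coe, id_eq,
        TensorProduct.assoc_tmul, bdelta_pb K A H a]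
  · -- counit left
    intro v
    induction v using Finsupp.induction_linear with
    | zero =>
      rw [(bdelta K A H).map_zero,
        (TensorProduct.map (beps K A H)
          (LinearMap.id : (BPair A H →₀ K) →ₗ[K] (BPair A H →₀ K))).map_zero,
        (TensorProduct.lid K (BPair A H →₀ K)).map_zero]
    | add f g hf hg => rw [map_add, map_add, LinearEquiv.map_add, hf, hg]
    | single a b =>
      rw [show Finsupp.single a b = b • pb K A H a by simp [pb, Finsupp.smul_single],
        map_smul, bdelta_pb, map_smul, TensorProduct.map_tmul, beps_pb,
        LinearMap.id_apply, LinearEquiv.map_smul, TensorProduct.lid_tmul, one_smul]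
  · -- counit right
    intro v
    induction v using Finsupp.induction_linear with
    | zero =>
      rw [(bdelta K A H).map_zero,
        (TensorProduct.map (LinearMap.id : (BPair A H →₀ K) →ₗ[K] (BPair A H →₀ K))
          (beps K A H)).map_zero,
        (TensorProduct.rid K (BPair A H →₀ K)).map_zero]
    | add f g hf hg => rw [map_add, map_add, LinearEquiv.map_add, hf, hg]
    | single a b =>
      rw [show Finsupp.single a b = b • pb K A H a by simp [pb, Finsupp.smul_single],
        map_smul, bdelta_pb, map_smul, TensorProduct.map_tmul, beps_pb,
        LinearMap.id_apply, LinearEquiv.map_smul, TensorProduct.rid_tmul, one_smul]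
  · -- cocommutativity
    intro v
    induction v using Finsupp.induction_linear with
    | zero =>
      rw [(bdelta K A H).map_zero,
        (TensorProduct.comm K (BPair A H →₀ K) (BPair A H →₀ K)).map_zero]
    | add f g hf hg => rw [map_add, LinearEquiv.map_add, hf, hg]
    | single a b =>
      rw [show Finsupp.single a b = b • pb K A H a by simp [pb, Finsupp.smul_single],
        map_smul, bdelta_pb, LinearEquiv.map_smul, TensorProduct.comm_tmul]
  · -- (d1)
    intro p q
    by_cases hc : H.s p.val.2 = A.t q.val.1
    · rw [bmul_pb K A H φA φH hmp p q hc, bdelta_pb]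
    · rw [bmul_pb_ne K A H φA φH hmp p q hc]; simp
  · -- (d2)
    intro p q r
    by_cases hc1 : H.s p.val.2 = A.t q.val.1
    · by_cases hc2 : H.s q.val.2 = A.t r.val.1
      · rw [bmul_pb K A H φA φH hmp p q hc1, bmul_pb K A H φA φH hmp q r hc2]
        have hL : H.s (mpair A H φA φH hmp p q hc1).val.2 = A.t r.val.1 := by
          rw [mpair_s2]; exact hc2
        have hR : H.s p.val.2 = A.t (mpair A H φA φH hmp q r hc2).val.1 := by
          rw [mpair_t1]; exact hc1
        rw [bmul_pb K A H φA φH hmp _ r hL, bmul_pb K A H φA φH hmp p _ hR,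
          beps_pb, beps_pb, beps_pb, beps_pb]
        exact ⟨rfl, (one_mul 1).symm⟩
      · rw [bmul_pb K A H φA φH hmp p q hc1, bmul_pb_ne K A H φA φH hmp q r hc2]
        have hL : ¬ H.s (mpair A H φA φH hmp p q hc1).val.2 = A.t r.val.1 := by
          rw [mpair_s2]; exact hc2
        rw [bmul_pb_ne K A H φA φH hmp _ r hL]
        simp
    · rw [bmul_pb_ne K A H φA φH hmp p q hc1]
      by_cases hc2 : H.s q.val.2 = A.t r.val.1
      · rw [bmul_pb K A H φA φH hmp q r hc2]
        have hR : ¬ H.s p.val.2 = A.t (mpair A H φA φH hmp q r hc2).val.1 := by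
          rw [mpair_t1]; exact hc1
        rw [bmul_pb_ne K A H φA φH hmp p _ hR]
        simp
      · rw [bmul_pb_ne K A H φA φH hmp q r hc2]; simp
  · -- (d3) first
    have key : ∀ x y : O, bmul K A H φA φH hmp (pb K A H (punit A H x))
        (pb K A H (punit A H y)) = if x = y then pb K A H (punit A H x) else 0 := by
      intro x y
      rw [bmul_punit_pb K A H φA φH hmp x (punit A H y)]
      by_cases h : x = y
      · subst h; simp [punit_val, A.t_e]
      · rw [if_neg (by simpa [punit_val, A.t_e] using h), if_neg h]
    have inner : ∀ x : O, (∑ y : O, pb K A H (punit A H x) ⊗ₜ[K]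
        (bmul K A H φA φH hmp (pb K A H (punit A H x)) (pb K A H (punit A H y)) ⊗ₜ[K]
          pb K A H (punit A H y))) =
        pb K A H (punit A H x) ⊗ₜ[K] (pb K A H (punit A H x) ⊗ₜ[K] pb K A H (punit A H x)) := by
      intro x
      rw [Finset.sum_congr rfl (fun y _ => show _ = if x = y then pb K A H (punit A H x) ⊗ₜ[K]
          (pb K A H (punit A H x) ⊗ₜ[K] pb K A H (punit A H x)) else 0 from by
        rw [key x y]
        by_cases h : x = y
        · subst h; rw [if_pos rfl, if_pos rfl]
        · rw [if_neg h, if_neg h]; simp)]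
      rw [Finset.sum_ite_eq Finset.univ x, if_pos (Finset.mem_univ _)]
    rw [Finset.sum_congr rfl fun x _ => (inner x).symm]
  · -- (d3) second
    have key : ∀ x y : O, bmul K A H φA φH hmp (pb K A H (punit A H y))
        (pb K A H (punit A H x)) = if y = x then pb K A H (punit A H x) else 0 := by
      intro x y
      rw [bmul_punit_pb K A H φA φH hmp y (punit A H x)]
      by_cases h : y = x
      · subst h; simp [punit_val, A.t_e]
      · rw [if_neg (by simpa [punit_val, A.t_e] using h), if_neg h]
    have inner : ∀ x : O, (∑ y : O, pb K A H (punit A H x) ⊗ₜ[K]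
        (bmul K A H φA φH hmp (pb K A H (punit A H y)) (pb K A H (punit A H x)) ⊗ₜ[K]
          pb K A H (punit A H y))) =
        pb K A H (punit A H x) ⊗ₜ[K] (pb K A H (punit A H x) ⊗ₜ[K] pb K A H (punit A H x)) := by
      intro x
      rw [Finset.sum_congr rfl (fun y _ => show _ = if y = x then pb K A H (punit A H x) ⊗ₜ[K]
          (pb K A H (punit A H x) ⊗ₜ[K] pb K A H (punit A H x)) else 0 from by
        rw [key x y]
        by_cases h : y = x
        · subst h; rw [if_pos rfl, if_pos rfl]
        · rw [if_neg h, if_neg h]; simp)]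
      rw [Finset.sum_ite_eq' Finset.univ x, if_pos (Finset.mem_univ _)]
    rw [Finset.sum_congr rfl fun x _ => (inner x).symm]
  · -- Π^L = id ∗ λ
    intro p
    rw [bS_pb, bPiL_pb]
    have hinv := hinv_comp A H φA φH hmp p
    refine bmul_pb_eq K A H φA φH hmp _ _ _ ?_ ?_
    · rw [t_spair1]
    · show (A.e (A.t p.val.1), H.e (A.t p.val.1)) = _
      rw [phiA_p2_spair1 A H φA φH hmp p, phiH_p2_spair1 A H φA φH hmp p,
        A.mul_inv_self, H.inv_mul_self, s_spair2]
  · -- Π^R = λ ∗ id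
    intro p
    rw [bS_pb, bPiR_pb]
    refine bmul_pb_eq K A H φA φH hmp _ _ _ (s_spair2 A H φA φH hmp p) ?_
    show (A.e (H.s p.val.2), H.e (H.s p.val.2)) = _
    rw [phiA_spair2_p1 A H φA φH hmp p, phiH_spair2_p1 A H φA φH hmp p,
      A.mul_inv_self, H.inv_mul_self, t_spair1]
  · -- (d4-1)
    intro p
    rw [bPiL_pb]
    have key : ∀ x : O, beps K A H (bmul K A H φA φH hmp (pb K A H (punit A H x))
        (pb K A H p)) • pb K A H (punit A H x) =
        if x = A.t p.val.1 then pb K A H (punit A H x) else 0 := by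
      intro x
      rw [bmul_punit_pb K A H φA φH hmp x p]
      by_cases h : x = A.t p.val.1
      · rw [if_pos h, if_pos h, beps_pb, one_smul]
      · rw [if_neg h, if_neg h, map_zero, zero_smul]
    rw [Finset.sum_congr rfl fun x _ => key x,
      Finset.sum_ite_eq' Finset.univ (A.t p.val.1) (fun x => pb K A H (punit A H x)),
      if_pos (Finset.mem_univ _)]
  · -- (d4-2)
    intro p
    rw [bPiR_pb]
    have key : ∀ x : O, beps K A H (bmul K A H φA φH hmp (pb K A H p)
        (pb K A H (punit A H x))) • pb K A H (punit A H x) =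
        if H.s p.val.2 = x then pb K A H (punit A H x) else 0 := by
      intro x
      rw [bmul_pb_punit K A H φA φH hmp p x]
      by_cases h : H.s p.val.2 = x
      · rw [if_pos h, if_pos h, beps_pb, one_smul]
      · rw [if_neg h, if_neg h, map_zero, zero_smul]
    rw [Finset.sum_congr rfl fun x _ => key x,
      Finset.sum_ite_eq Finset.univ (H.s p.val.2) (fun x => pb K A H (punit A H x)),
      if_pos (Finset.mem_univ _)]
  · -- (d4-3)
    intro p
    constructor
    · rw [bS_pb, bPiL_pb, bmul_pb_punit K A H φA φH hmp _ _,
        if_pos (s_spair2 A H φA φH hmp p)]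
    · rw [bS_pb, bPiR_pb, bmul_punit_pb K A H φA φH hmp _ _,
        if_pos (by rw [t_spair1])]
  · -- (d4-4)
    intro p q
    rw [bS_pb, bPiR_pb, bmul_punit_pb K A H φA φH hmp _ q]
    by_cases hc : H.s p.val.2 = A.t q.val.1
    · rw [if_pos hc, bmul_pb K A H φA φH hmp p q hc]
      have hax : A.s p.val.1 = A.t (φA p.val.2 q.val.1) := by
        rw [hmp.t_act _ _ hc]; exact p.2
      refine bmul_pb_eq K A H φA φH hmp _ _ _ ?_ ?_
      · rw [s_spair2, mpair_t1]
      · show q.val = (A.mul (φA (H.inv p.val.2) (A.inv p.val.1))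
            (φA (φH (H.inv p.val.2) (A.inv p.val.1))
              (A.mul p.val.1 (φA p.val.2 q.val.1))),
          H.mul (φH (φH (H.inv p.val.2) (A.inv p.val.1))
              (A.mul p.val.1 (φA p.val.2 q.val.1)))
            (H.mul (φH p.val.2 q.val.1) q.val.2))
        have hinv := hinv_comp A H φA φH hmp p
        have hsla : A.s (A.inv p.val.1) = A.t (A.mul p.val.1 (φA p.val.2 q.val.1)) := by
          rw [A.s_inv', A.t_mul _ _ hax]
        have c1 : A.mul (φA (H.inv p.val.2) (A.inv p.val.1))
            (φA (φH (H.inv p.val.2) (A.inv p.val.1))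
              (A.mul p.val.1 (φA p.val.2 q.val.1))) = q.val.1 := by
          rw [← hmp.compat_mulA (H.inv p.val.2) (A.inv p.val.1) _ hinv hsla,
            A.inv_mul_cancel _ _ hax,
            ← hmp.act_mul (H.inv p.val.2) p.val.2 q.val.1 (H.s_inv' p.val.2) hc,
            H.inv_mul_self, hc]
          exact hmp.act_id _
        have c2 : H.mul (φH (φH (H.inv p.val.2) (A.inv p.val.1))
            (A.mul p.val.1 (φA p.val.2 q.val.1)))
            (H.mul (φH p.val.2 q.val.1) q.val.2) = q.val.2 := by
          rw [← hmp.actH_mul (H.inv p.val.2) (A.inv p.val.1) _ hinv hsla,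
            A.inv_mul_cancel _ _ hax, mp_inv_actA A H φA φH hmp p.val.2 q.val.1 hc]
          exact H.inv_mul_cancel _ _ (by rw [hmp.s_act _ _ hc]; exact q.2)
        rw [c1, c2]
    · rw [if_neg hc, bmul_pb_ne K A H φA φH hmp p q hc, map_zero]
  · -- (d4-5)
    intro p q
    rw [bS_pb, bPiL_pb, bmul_punit_pb K A H φA φH hmp _ q]
    by_cases hc : A.t p.val.1 = A.t q.val.1
    · have hc1 : H.s (spair A H φA φH hmp p).val.2 = A.t q.val.1 :=
        (s_spair2 A H φA φH hmp p).trans hc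
      rw [if_pos hc, bmul_pb K A H φA φH hmp _ q hc1]
      have hinv := hinv_comp A H φA φH hmp p
      have hc1' : H.s (φH (H.inv p.val.2) (A.inv p.val.1)) = A.t q.val.1 := hc1
      refine bmul_pb_eq K A H φA φH hmp _ _ _ ?_ ?_
      · rw [mpair_t1, t_spair1]
      · show q.val = (A.mul p.val.1 (φA p.val.2
            (A.mul (φA (H.inv p.val.2) (A.inv p.val.1))
              (φA (φH (H.inv p.val.2) (A.inv p.val.1)) q.val.1))),
          H.mul (φH p.val.2 (A.mul (φA (H.inv p.val.2) (A.inv p.val.1))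
              (φA (φH (H.inv p.val.2) (A.inv p.val.1)) q.val.1)))
            (H.mul (φH (φH (H.inv p.val.2) (A.inv p.val.1)) q.val.1) q.val.2))
        have hca' : H.s p.val.2 = A.t (φA (H.inv p.val.2) (A.inv p.val.1)) := by
          rw [hmp.t_act _ _ hinv, H.t_inv']
        have hsa' : A.s (φA (H.inv p.val.2) (A.inv p.val.1)) =
            A.t (φA (φH (H.inv p.val.2) (A.inv p.val.1)) q.val.1) := by
          rw [hmp.t_act _ _ hc1']
          exact hmp.compat_st _ _ hinv
        have e1 : φA p.val.2 (φA (H.inv p.val.2) (A.inv p.val.1)) = A.inv p.val.1 :=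
          phiA_p2_spair1 A H φA φH hmp p
        have e2 : φH p.val.2 (φA (H.inv p.val.2) (A.inv p.val.1)) =
            H.inv (φH (H.inv p.val.2) (A.inv p.val.1)) := phiH_p2_spair1 A H φA φH hmp p
        have c1 : A.mul p.val.1 (φA p.val.2
            (A.mul (φA (H.inv p.val.2) (A.inv p.val.1))
              (φA (φH (H.inv p.val.2) (A.inv p.val.1)) q.val.1))) = q.val.1 := by
          rw [hmp.compat_mulA p.val.2 _ _ hca' hsa', e1, e2,
            ← hmp.act_mul _ _ q.val.1 (H.s_inv' _) hc1',
            H.inv_mul_self, hmp.s_act _ _ hinv, A.s_inv', hc,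
            hmp.act_id q.val.1]
          have h2 := A.inv_mul_cancel (A.inv p.val.1) q.val.1 (by rw [A.s_inv']; exact hc)
          rwa [A.inv_inv] at h2
        have c2 : H.mul (φH p.val.2 (A.mul (φA (H.inv p.val.2) (A.inv p.val.1))
              (φA (φH (H.inv p.val.2) (A.inv p.val.1)) q.val.1)))
            (H.mul (φH (φH (H.inv p.val.2) (A.inv p.val.1)) q.val.1) q.val.2) = q.val.2 := by
          rw [hmp.actH_mul p.val.2 _ _ hca' hsa', e2,
            mp_inv_actA A H φA φH hmp _ q.val.1 hc1']
          exact H.inv_mul_cancel _ _ (by rw [hmp.s_act _ _ hc1']; exact q.2)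
        rw [c1, c2]
    · have hc1 : ¬ H.s (spair A H φA φH hmp p).val.2 = A.t q.val.1 := by
        rw [s_spair2]; exact hc
      rw [if_neg hc, bmul_pb_ne K A H φA φH hmp _ q hc1, map_zero]
  · -- (d4-6)
    intro p q
    rw [bS_pb, bPiL_pb, bmul_pb_punit K A H φA φH hmp q (A.t p.val.1)]
    by_cases hc : H.s q.val.2 = A.t p.val.1
    · rw [if_pos hc, bmul_pb K A H φA φH hmp q p hc]
      have hinv := hinv_comp A H φA φH hmp p
      have hmc : H.s (mpair A H φA φH hmp q p hc).val.2 =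
          A.t (spair A H φA φH hmp p).val.1 := by
        rw [mpair_s2, t_spair1]
      refine bmul_pb_eq K A H φA φH hmp _ _ _ hmc ?_
      show q.val = (A.mul (A.mul q.val.1 (φA q.val.2 p.val.1))
          (φA (H.mul (φH q.val.2 p.val.1) p.val.2) (φA (H.inv p.val.2) (A.inv p.val.1))),
        H.mul (φH (H.mul (φH q.val.2 p.val.1) p.val.2) (φA (H.inv p.val.2) (A.inv p.val.1)))
          (φH (H.inv p.val.2) (A.inv p.val.1)))
      have hga : H.s (φH q.val.2 p.val.1) = H.t p.val.2 := by
        rw [hmp.s_act _ _ hc]; exact p.2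
      have hca' : H.s p.val.2 = A.t (φA (H.inv p.val.2) (A.inv p.val.1)) := by
        rw [hmp.t_act _ _ hinv, H.t_inv']
      have e1 : φA p.val.2 (φA (H.inv p.val.2) (A.inv p.val.1)) = A.inv p.val.1 :=
        phiA_p2_spair1 A H φA φH hmp p
      have e2 : φH p.val.2 (φA (H.inv p.val.2) (A.inv p.val.1)) =
          H.inv (φH (H.inv p.val.2) (A.inv p.val.1)) := phiH_p2_spair1 A H φA φH hmp p
      have c1 : A.mul (A.mul q.val.1 (φA q.val.2 p.val.1))
          (φA (H.mul (φH q.val.2 p.val.1) p.val.2)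
            (φA (H.inv p.val.2) (A.inv p.val.1))) = q.val.1 := by
        rw [hmp.act_mul _ _ _ hga hca', e1,
          mp_actA_inv A H φA φH hmp q.val.2 p.val.1 hc]
        exact A.mul_inv_cancel _ _ (by rw [hmp.t_act _ _ hc]; exact q.2)
      have c2 : H.mul (φH (H.mul (φH q.val.2 p.val.1) p.val.2)
            (φA (H.inv p.val.2) (A.inv p.val.1)))
          (φH (H.inv p.val.2) (A.inv p.val.1)) = q.val.2 := by
        rw [hmp.compat_mulH _ _ _ hga hca', e1, e2,
          mp_actH_inv A H φA φH hmp q.val.2 p.val.1 hc]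
        have hgh : H.s q.val.2 = H.t (H.inv (φH (H.inv p.val.2) (A.inv p.val.1))) := by
          rw [H.t_inv', hmp.s_act _ _ hinv, A.s_inv']; exact hc
        have h2 := H.mul_inv_cancel q.val.2 (H.inv (φH (H.inv p.val.2) (A.inv p.val.1))) hgh
        rwa [H.inv_inv] at h2
      rw [c1, c2]
    · rw [if_neg hc, bmul_pb_ne K A H φA φH hmp q p hc, map_zero, LinearMap.zero_apply]
  · -- (d4-7)
    intro p q
    rw [bS_pb, bPiR_pb, bmul_pb_punit K A H φA φH hmp q (H.s p.val.2)]
    by_cases hc : H.s q.val.2 = H.s p.val.2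
    · have hc1 : H.s q.val.2 = A.t (spair A H φA φH hmp p).val.1 := by
        rw [t_spair1]; exact hc
      rw [if_pos hc, bmul_pb K A H φA φH hmp q _ hc1]
      have hinv := hinv_comp A H φA φH hmp p
      have hc1' : H.s q.val.2 = A.t (φA (H.inv p.val.2) (A.inv p.val.1)) := hc1
      have hmc : H.s (mpair A H φA φH hmp q (spair A H φA φH hmp p) hc1).val.2 =
          A.t p.val.1 := by
        rw [mpair_s2, s_spair2]
      refine bmul_pb_eq K A H φA φH hmp _ _ _ hmc ?_
      show q.val = (A.mul (A.mul q.val.1 (φA q.val.2 (φA (H.inv p.val.2) (A.inv p.val.1))))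
          (φA (H.mul (φH q.val.2 (φA (H.inv p.val.2) (A.inv p.val.1)))
            (φH (H.inv p.val.2) (A.inv p.val.1))) p.val.1),
        H.mul (φH (H.mul (φH q.val.2 (φA (H.inv p.val.2) (A.inv p.val.1)))
            (φH (H.inv p.val.2) (A.inv p.val.1))) p.val.1)
          p.val.2)
      have hga : H.s (φH q.val.2 (φA (H.inv p.val.2) (A.inv p.val.1))) =
          H.t (φH (H.inv p.val.2) (A.inv p.val.1)) := by
        rw [hmp.s_act _ _ hc1']
        exact hmp.compat_st _ _ hinv
      have hch' : H.s (φH (H.inv p.val.2) (A.inv p.val.1)) = A.t p.val.1 := by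
        rw [hmp.s_act _ _ hinv, A.s_inv']
      have e3 : φA (φH (H.inv p.val.2) (A.inv p.val.1)) p.val.1 =
          A.inv (φA (H.inv p.val.2) (A.inv p.val.1)) := phiA_spair2_p1 A H φA φH hmp p
      have e4 : φH (φH (H.inv p.val.2) (A.inv p.val.1)) p.val.1 = H.inv p.val.2 :=
        phiH_spair2_p1 A H φA φH hmp p
      have c1 : A.mul (A.mul q.val.1 (φA q.val.2 (φA (H.inv p.val.2) (A.inv p.val.1))))
          (φA (H.mul (φH q.val.2 (φA (H.inv p.val.2) (A.inv p.val.1)))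
            (φH (H.inv p.val.2) (A.inv p.val.1))) p.val.1) = q.val.1 := by
        rw [hmp.act_mul _ _ _ hga hch', e3,
          mp_actA_inv A H φA φH hmp q.val.2 _ hc1']
        exact A.mul_inv_cancel _ _ (by rw [hmp.t_act _ _ hc1']; exact q.2)
      have c2 : H.mul (φH (H.mul (φH q.val.2 (φA (H.inv p.val.2) (A.inv p.val.1)))
            (φH (H.inv p.val.2) (A.inv p.val.1))) p.val.1)
          p.val.2 = q.val.2 := by
        rw [hmp.compat_mulH _ _ _ hga hch', e3, e4,
          mp_actH_inv A H φA φH hmp q.val.2 _ hc1']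
        have h2 := H.mul_inv_cancel q.val.2 (H.inv p.val.2)
          (by rw [H.t_inv']; exact hc)
        rwa [H.inv_inv] at h2
      rw [c1, c2]
    · have hc1 : ¬ H.s q.val.2 = A.t (spair A H φA φH hmp p).val.1 := by
        rw [t_spair1]; exact hc
      rw [if_neg hc, bmul_pb_ne K A H φA φH hmp q _ hc1, map_zero,
        LinearMap.zero_apply]
  · -- Π^L explicit
    exact fun p => bPiL_pb K A H p
  · -- Π^R explicit
    exact fun p => bPiR_pb K A H p

end
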